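/- Let χ and χ̂ be measurable functions on [0,∞) with χ(t) = χ̂(t) = 1 for 0 ≤ t ≤ 1 and |χ(t)| ≤ 1, |χ̂(t)| ≤ 1 for all t, and let σ and σ̂ be the corresponding solutions of the integral equation. Then for every u ≥ 0, σ̂(u) = σ(u) + ∑_{j=1}^{∞} (1/j!) ∫_{t_1,…,t_j ≥ 1, t_1+⋯+t_j ≤ u} ∏_{i=1}^{j} (χ̂(t_i) − χ(t_i))/t_i · σ(u − t_1 − ⋯ − t_j) dt_1⋯dt_j. -/

import Mathlib

open MeasureTheory Filter Real

noncomputable section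

/-- `χ` is measurable, equals `1` on `[0,1]`, and has `|χ| ≤ 1` on `[0,∞)`
(complex-valued case). -/
def ChiOKC (χ : ℝ → ℂ) : Prop :=
  Measurable χ ∧ (∀ t : ℝ, 0 ≤ t → t ≤ 1 → χ t = 1) ∧ (∀ t : ℝ, 0 ≤ t → ‖χ t‖ ≤ 1)

/-- `σ` is the (unique) continuous solution of `u σ(u) = ∫_0^u χ(t) σ(u-t) dt` with
`σ = 1` on `[0,1]` (complex-valued case). -/
def IsSolnC (χ σ : ℝ → ℂ) : Prop :=
  ContinuousOn σ (Set.Ici 0) ∧ (∀ u : ℝ, 0 ≤ u → u ≤ 1 → σ u = 1) ∧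
    ∀ u : ℝ, 1 < u → (u : ℂ) * σ u = ∫ t in (0:ℝ)..u, χ t * σ (u - t)

/-- The `j`-fold integral
`∫_{t_1,…,t_j ≥ 1, t_1+⋯+t_j ≤ u} ∏_i (χ̂(t_i)-χ(t_i))/t_i ⋅ σ(u - t_1 - ⋯ - t_j) dt`. -/
def Jfn (χ χh : ℝ → ℂ) (σ : ℝ → ℂ) (j : ℕ) (u : ℝ) : ℂ :=
  ∫ t in {t : Fin j → ℝ | (∀ i, 1 ≤ t i) ∧ ∑ i, t i ≤ u},
    (∏ i, (χh (t i) - χ (t i)) / ((t i : ℝ) : ℂ)) * σ (u - ∑ i, t i)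

namespace GS25


/-- kernel `g(t) = 1_{t≥1} (χh t - χ t)/t`. -/
def gfun (χ χh : ℝ → ℂ) (t : ℝ) : ℂ := if 1 ≤ t then (χh t - χ t) / (t : ℂ) else 0

/-- `g2(t) = 1_{t≥1} (χh t - χ t)` = `t * g t`. -/
def g2fun (χ χh : ℝ → ℂ) (t : ℝ) : ℂ := if 1 ≤ t then (χh t - χ t) else 0

/-- `c(t) = 1_{t≥0} χ t`. -/
def cfun (χ : ℝ → ℂ) (t : ℝ) : ℂ := if 0 ≤ t then χ t else 0

/-- iterated convolution kernel. -/
def K (χ χh σ : ℝ → ℂ) : ℕ → ℝ → ℂ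
  | 0 => (Set.Ici (0:ℝ)).indicator σ
  | (j+1) => fun u => ∫ t : ℝ, gfun χ χh t * K χ χh σ j (u - t)

variable {χ χh σ : ℝ → ℂ}

lemma gfun_measurable (hχ : Measurable χ) (hχh : Measurable χh) :
    Measurable (gfun χ χh) := by
  apply Measurable.ite measurableSet_Ici
  · exact (hχh.sub hχ).div (Complex.measurable_ofReal)
  · exact measurable_const

lemma g2fun_measurable (hχ : Measurable χ) (hχh : Measurable χh) :
    Measurable (g2fun χ χh) :=
  Measurable.ite measurableSet_Ici (hχh.sub hχ) measurable_const

lemma cfun_measurable (hχ : Measurable χ) : Measurable (cfun χ) :=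
  Measurable.ite measurableSet_Ici hχ measurable_const

lemma gfun_norm_le (hχ : ChiOKC χ) (hχh : ChiOKC χh) (t : ℝ) : ‖gfun χ χh t‖ ≤ 2 := by
  unfold gfun
  split_ifs with h
  · have ht0 : (0:ℝ) ≤ t := le_trans zero_le_one h
    have h1 : ‖χh t - χ t‖ ≤ 2 := by
      calc ‖χh t - χ t‖ ≤ ‖χh t‖ + ‖χ t‖ := norm_sub_le _ _
      _ ≤ 1 + 1 := add_le_add (hχh.2.2 t ht0) (hχ.2.2 t ht0)
      _ = 2 := by norm_num
    have h2 : ‖((t:ℝ):ℂ)‖ = t := by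
      rw [Complex.norm_real, Real.norm_eq_abs, abs_of_nonneg ht0]
    rw [norm_div, h2]
    calc ‖χh t - χ t‖ / t ≤ ‖χh t - χ t‖ / 1 :=
          div_le_div_of_nonneg_left (norm_nonneg _) one_pos h
      _ = ‖χh t - χ t‖ := div_one _
      _ ≤ 2 := h1
  · norm_num

lemma g2fun_norm_le (hχ : ChiOKC χ) (hχh : ChiOKC χh) (t : ℝ) : ‖g2fun χ χh t‖ ≤ 2 := by
  unfold g2fun
  split_ifs with h
  · have ht0 : (0:ℝ) ≤ t := le_trans zero_le_one h
    calc ‖χh t - χ t‖ ≤ ‖χh t‖ + ‖χ t‖ := norm_sub_le _ _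
      _ ≤ 1 + 1 := add_le_add (hχh.2.2 t ht0) (hχ.2.2 t ht0)
      _ = 2 := by norm_num
  · norm_num

lemma cfun_norm_le (hχ : ChiOKC χ) (t : ℝ) : ‖cfun χ t‖ ≤ 1 := by
  unfold cfun
  split_ifs with h
  · exact hχ.2.2 t h
  · norm_num

lemma gfun_eq_zero {t : ℝ} (h : t < 1) : gfun χ χh t = 0 := if_neg (not_le.mpr h)
lemma g2fun_eq_zero {t : ℝ} (h : t < 1) : g2fun χ χh t = 0 := if_neg (not_le.mpr h)
lemma cfun_eq_zero {t : ℝ} (h : t < 0) : cfun χ t = 0 := if_neg (not_le.mpr h)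

lemma mul_gfun (t : ℝ) : (t : ℂ) * gfun χ χh t = g2fun χ χh t := by
  unfold gfun g2fun
  split_ifs with h
  · have : ((t:ℝ):ℂ) ≠ 0 := by
      simp only [ne_eq, Complex.ofReal_eq_zero]
      intro h0; rw [h0] at h; norm_num at h
    field_simp
  · ring

lemma K_zero_measurable (hσc : ContinuousOn σ (Set.Ici 0)) :
    Measurable (K χ χh σ 0) := by
  show Measurable ((Set.Ici (0:ℝ)).indicator σ)
  classical
  rw [← Set.piecewise_eq_indicator]
  exact hσc.measurable_piecewise continuousOn_const measurableSet_Ici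

lemma K_zero_apply (u : ℝ) (hu : 0 ≤ u) : K χ χh σ 0 u = σ u :=
  Set.indicator_of_mem hu σ

lemma K_zero_apply_neg {u : ℝ} (hu : u < 0) : K χ χh σ 0 u = 0 :=
  Set.indicator_of_notMem (by simpa using not_le.mpr hu) σ


variable {σh : ℝ → ℂ}
/-- `K j u = 0` for `u < j`, in particular for `u < 0`. -/
lemma K_zero_of_lt : ∀ (j : ℕ) {u : ℝ}, u < j → K χ χh σ j u = 0 := by
  intro j
  induction j with
  | zero => intro u hu; exact K_zero_apply_neg (by exact_mod_cast hu)
  | succ j ih =>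
    intro u hu
    show (∫ t : ℝ, gfun χ χh t * K χ χh σ j (u - t)) = 0
    have : (fun t : ℝ => gfun χ χh t * K χ χh σ j (u - t)) = fun _ => 0 := by
      funext t
      by_cases ht : 1 ≤ t
      · have : u - t < j := by
          push_cast at hu ⊢
          linarith
        rw [ih this, mul_zero]
      · rw [gfun_eq_zero (not_le.mp ht), zero_mul]
    rw [this, integral_zero]

/-- `K (j+1) u = 0` even for `u ≤ j+1`. -/
lemma K_succ_zero_of_le : ∀ (j : ℕ) {u : ℝ}, u ≤ j + 1 → K χ χh σ (j+1) u = 0 := by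
  intro j
  induction j with
  | zero =>
    intro u hu
    show (∫ t : ℝ, gfun χ χh t * K χ χh σ 0 (u - t)) = 0
    have hae : ∀ᵐ t : ℝ, gfun χ χh t * K χ χh σ 0 (u - t) = 0 := by
      have h1 : ∀ᵐ t : ℝ, t ≠ 1 := by
        rw [ae_iff]
        simp only [ne_eq, not_not]
        show volume {t : ℝ | t = 1} = 0
        have : {t : ℝ | t = 1} = {1} := by ext; simp
        rw [this]; exact Real.volume_singleton
      filter_upwards [h1] with t ht
      by_cases h : 1 ≤ t
      · have : u - t < 0 := by
          rcases lt_or_eq_of_le h with h' | h'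
          · norm_num at hu; linarith
          · exact absurd h'.symm ht
        rw [K_zero_apply_neg this, mul_zero]
      · rw [gfun_eq_zero (not_le.mp h), zero_mul]
    exact integral_eq_zero_of_ae hae
  | succ j ih =>
    intro u hu
    show (∫ t : ℝ, gfun χ χh t * K χ χh σ (j+1) (u - t)) = 0
    have : (fun t : ℝ => gfun χ χh t * K χ χh σ (j+1) (u - t)) = fun _ => 0 := by
      funext t
      by_cases ht : 1 ≤ t
      · have : u - t ≤ j + 1 := by push_cast at hu ⊢; linarith
        rw [ih this, mul_zero]
      · rw [gfun_eq_zero (not_le.mp ht), zero_mul]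
    rw [this, integral_zero]

/-- Measurability of all the `K j`. -/
lemma K_measurable (hχ : Measurable χ) (hχh : Measurable χh)
    (hσc : ContinuousOn σ (Set.Ici 0)) : ∀ j, Measurable (K χ χh σ j) := by
  intro j
  induction j with
  | zero => exact K_zero_measurable hσc
  | succ j ih =>
    show Measurable fun u => ∫ t : ℝ, gfun χ χh t * K χ χh σ j (u - t)
    have hjoint : StronglyMeasurable (Function.uncurry
        (fun (u : ℝ) (t : ℝ) => gfun χ χh t * K χ χh σ j (u - t))) := by
      apply Measurable.stronglyMeasurable
      apply Measurable.mul
      · exact (gfun_measurable hχ hχh).comp measurable_snd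
      · exact ih.comp (measurable_fst.sub measurable_snd)
    exact hjoint.integral_prod_right.measurable

/-- Uniform bound on `K j` on `(-∞, U]`. -/
lemma K_norm_le (hχ : ChiOKC χ) (hχh : ChiOKC χh) (hσc : ContinuousOn σ (Set.Ici 0))
    (U : ℝ) : ∃ M : ℝ, 0 ≤ M ∧ ∀ j, ∀ u ≤ U, ‖K χ χh σ j u‖ ≤ M * (2 * max U 1)^j := by
  obtain ⟨C, hC⟩ := (isCompact_Icc (a := (0:ℝ)) (b := max U 0)).exists_bound_of_continuousOn
    (hσc.mono (by intro x hx; exact hx.1))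
  refine ⟨max C 0, le_max_right _ _, ?_⟩
  intro j
  induction j with
  | zero =>
    intro u hu
    rw [pow_zero, mul_one]
    by_cases h : 0 ≤ u
    · rw [K_zero_apply u h]  -- might need namespace
      exact le_trans (hC u ⟨h, le_max_of_le_left hu⟩) (le_max_left _ _)
    · rw [K_zero_apply_neg (not_le.mp h)]
      simp [le_max_right C 0]
  | succ j ih =>
    intro u hu
    show ‖∫ t : ℝ, gfun χ χh t * K χ χh σ j (u - t)‖ ≤ _
    have hzero : ∀ t ∉ Set.Icc (1:ℝ) U, gfun χ χh t * K χ χh σ j (u - t) = 0 := by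
      intro t ht
      rw [Set.mem_Icc, not_and_or] at ht
      rcases ht with ht | ht
      · rw [gfun_eq_zero (not_le.mp ht), zero_mul]
      · have h1 : U < t := not_le.mp ht
        have : u - t < 0 := by linarith
        rw [K_zero_of_lt j (lt_of_lt_of_le this (by exact_mod_cast Nat.cast_nonneg j)), mul_zero]
    rw [← setIntegral_eq_integral_of_forall_compl_eq_zero hzero]
    have hbound : ∀ t ∈ Set.Icc (1:ℝ) U, ‖gfun χ χh t * K χ χh σ j (u - t)‖ ≤
        2 * (max C 0 * (2 * max U 1)^j) := by
      intro t ht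
      rw [norm_mul]
      have h1 : ‖K χ χh σ j (u - t)‖ ≤ max C 0 * (2 * max U 1)^j :=
        ih (u - t) (by have := ht.1; linarith)
      have h2 := gfun_norm_le hχ hχh t
      exact mul_le_mul h2 h1 (norm_nonneg _)
        (by positivity)
    have hfin : volume (Set.Icc (1:ℝ) U) < ⊤ := by
      rw [Real.volume_Icc]; exact ENNReal.ofReal_lt_top
    have hmeas : AEStronglyMeasurable
        (fun t : ℝ => gfun χ χh t * K χ χh σ j (u - t)) (volume.restrict (Set.Icc 1 U)) := by
      apply Measurable.aestronglyMeasurable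
      exact ((gfun_measurable hχ.1 hχh.1).mul
        ((K_measurable hχ.1 hχh.1 hσc j).comp (measurable_const.sub measurable_id)))
    have := norm_setIntegral_le_of_norm_le_const hfin hbound
    refine le_trans this ?_
    have hvol : (volume (Set.Icc (1:ℝ) U)).toReal ≤ max U 1 := by
      rw [Real.volume_Icc, ENNReal.toReal_ofReal']
      have h1 : U - 1 ≤ max U 1 := by
        have := le_max_left U 1; have := le_max_right U 1; linarith
      have h2 : (0:ℝ) ≤ max U 1 := le_trans zero_le_one (le_max_right U 1)
      exact max_le h1 h2
    calc 2 * (max C 0 * (2 * max U 1) ^ j) * (volume (Set.Icc (1:ℝ) U)).toReal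
        ≤ 2 * (max C 0 * (2 * max U 1) ^ j) * max U 1 := by
          apply mul_le_mul_of_nonneg_left hvol
          positivity
      _ = max C 0 * (2 * max U 1) ^ (j + 1) := by ring
/-- A function that is measurable, vanishes on negatives, and is bounded on rays. -/
def Nice (F : ℝ → ℂ) : Prop :=
  Measurable F ∧ (∀ v : ℝ, v < 0 → F v = 0) ∧ ∀ U : ℝ, ∃ M : ℝ, ∀ v ≤ U, ‖F v‖ ≤ M

lemma Nice.bound {F : ℝ → ℂ} (hF : Nice F) (U : ℝ) :
    ∃ M : ℝ, 0 ≤ M ∧ ∀ v ≤ U, ‖F v‖ ≤ M := by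
  obtain ⟨M, hM⟩ := hF.2.2 U
  exact ⟨max M 0, le_max_right _ _, fun v hv => le_trans (hM v hv) (le_max_left _ _)⟩

lemma nice_of_bounded {w : ℝ → ℂ} (hm : Measurable w) {B : ℝ}
    (hB : ∀ t, ‖w t‖ ≤ B) (h0 : ∀ t : ℝ, t < 0 → w t = 0) : Nice w :=
  ⟨hm, h0, fun _ => ⟨B, fun v _ => hB v⟩⟩

/-- integrability of a convolution integrand. -/
lemma conv_integrand_integrable {w F : ℝ → ℂ} (hw : Nice w) (hF : Nice F) (u : ℝ) :
    Integrable (fun t => w t * F (u - t)) := by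
  obtain ⟨Bw, hBw0, hBw⟩ := hw.bound (max u 0)
  obtain ⟨MF, hMF0, hMF⟩ := hF.bound u
  have hmeas : Measurable fun t => w t * F (u - t) :=
    hw.1.mul (hF.1.comp (measurable_const.sub measurable_id))
  have hio : IntegrableOn (fun t => w t * F (u - t)) (Set.Icc 0 (max u 0)) := by
    apply Measure.integrableOn_of_bounded (M := Bw * MF)
    · rw [Real.volume_Icc]; exact ENNReal.ofReal_ne_top
    · exact hmeas.aestronglyMeasurable
    · apply ae_of_all
      intro t
      by_cases ht : 0 ≤ t
      · by_cases htu : u - t < 0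
        · rw [hF.2.1 _ htu, mul_zero, norm_zero]; positivity
        · rw [norm_mul]
          exact mul_le_mul (hBw t (le_max_of_le_left (by linarith)))
            (hMF _ (by linarith)) (norm_nonneg _) hBw0
      · rw [hw.2.1 t (not_le.mp ht), zero_mul, norm_zero]; positivity
  apply hio.integrable_of_forall_notMem_eq_zero
  intro t ht
  rw [Set.mem_Icc, not_and_or] at ht
  rcases ht with ht | ht
  · rw [hw.2.1 t (not_le.mp ht), zero_mul]
  · have : u - t < 0 := by
      have := not_le.mp ht
      have := le_max_left u 0
      linarith
    rw [hF.2.1 _ this, mul_zero]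

/-- the convolution of nice functions is nice. -/
lemma Nice.conv {w F : ℝ → ℂ} (hw : Nice w) (hF : Nice F) :
    Nice (fun v => ∫ t : ℝ, w t * F (v - t)) := by
  refine ⟨?_, ?_, ?_⟩
  · have hjoint : StronglyMeasurable (Function.uncurry
        (fun (v : ℝ) (t : ℝ) => w t * F (v - t))) := by
      apply Measurable.stronglyMeasurable
      exact (hw.1.comp measurable_snd).mul (hF.1.comp (measurable_fst.sub measurable_snd))
    exact hjoint.integral_prod_right.measurable
  · intro v hv
    show (∫ t : ℝ, w t * F (v - t)) = 0
    have : (fun t : ℝ => w t * F (v - t)) = fun _ => 0 := by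
      funext t
      by_cases ht : 0 ≤ t
      · rw [hF.2.1 _ (by linarith), mul_zero]
      · rw [hw.2.1 t (not_le.mp ht), zero_mul]
    rw [this, integral_zero]
  · intro U
    obtain ⟨Bw, hBw0, hBw⟩ := hw.bound (max U 0)
    obtain ⟨MF, hMF0, hMF⟩ := hF.bound U
    refine ⟨Bw * MF * max U 0, ?_⟩
    intro v hv
    show ‖∫ t : ℝ, w t * F (v - t)‖ ≤ Bw * MF * max U 0
    have hzero : ∀ t ∉ Set.Icc (0:ℝ) (max U 0), w t * F (v - t) = 0 := by
      intro t ht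
      rw [Set.mem_Icc, not_and_or] at ht
      rcases ht with ht | ht
      · rw [hw.2.1 t (not_le.mp ht), zero_mul]
      · have h1 : max U 0 < t := not_le.mp ht
        have : v - t < 0 := by
          have := le_max_left U 0
          linarith
        rw [hF.2.1 _ this, mul_zero]
    rw [← setIntegral_eq_integral_of_forall_compl_eq_zero hzero]
    have hbound : ∀ t ∈ Set.Icc (0:ℝ) (max U 0), ‖w t * F (v - t)‖ ≤ Bw * MF := by
      intro t ht
      rw [norm_mul]
      exact mul_le_mul (hBw t ht.2) (hMF _ (by have := ht.1; linarith))
        (norm_nonneg _) hBw0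
    have hfin : volume (Set.Icc (0:ℝ) (max U 0)) < ⊤ := by
      rw [Real.volume_Icc]; exact ENNReal.ofReal_lt_top
    have hmeas : AEStronglyMeasurable (fun t : ℝ => w t * F (v - t))
        (volume.restrict (Set.Icc 0 (max U 0))) :=
      (hw.1.mul (hF.1.comp (measurable_const.sub measurable_id))).aestronglyMeasurable
    refine le_trans (norm_setIntegral_le_of_norm_le_const hfin hbound) ?_
    unfold Measure.real
    rw [Real.volume_Icc, ENNReal.toReal_ofReal']
    simp only [sub_zero]
    rw [max_comm (max U 0) 0, max_eq_right (le_max_right U 0)]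

/-- The key Fubini step: associativity/commutativity of convolution. -/
lemma conv_assoc {w v F : ℝ → ℂ} (hw : Nice w) (hv : Nice v) (hF : Nice F) (u : ℝ) :
    ∫ t : ℝ, w t * ∫ s : ℝ, v s * F (u - t - s) =
      ∫ s : ℝ, v s * ∫ t : ℝ, w t * F ((u - s) - t) := by
  obtain ⟨Bw, hBw0, hBw⟩ := hw.bound (max u 0)
  obtain ⟨Bv, hBv0, hBv⟩ := hv.bound (max u 0)
  obtain ⟨MF, hMF0, hMF⟩ := hF.bound u
  set G : ℝ → ℝ → ℂ := fun t s => w t * (v s * F (u - t - s)) with hG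
  have hGmeas : Measurable (Function.uncurry G) := by
    apply Measurable.mul
    · exact hw.1.comp measurable_fst
    · apply Measurable.mul
      · exact hv.1.comp measurable_snd
      · exact hF.1.comp ((measurable_const.sub measurable_fst).sub measurable_snd)
  have hbox : MeasurableSet (Set.Icc (0:ℝ) (max u 0) ×ˢ Set.Icc (0:ℝ) (max u 0)) :=
    measurableSet_Icc.prod measurableSet_Icc
  have hGint : Integrable (Function.uncurry G) (volume.prod volume) := by
    apply Integrable.mono' (g := (Set.Icc (0:ℝ) (max u 0) ×ˢ Set.Icc (0:ℝ) (max u 0)).indicator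
      (fun _ => Bw * Bv * MF))
    · rw [integrable_indicator_iff hbox]
      apply (integrableOn_const_iff (C := Bw * Bv * MF) enorm_ne_top).mpr
      right
      rw [Measure.prod_prod, Real.volume_Icc]
      exact ENNReal.mul_lt_top ENNReal.ofReal_lt_top ENNReal.ofReal_lt_top
    · exact hGmeas.aestronglyMeasurable
    · apply ae_of_all
      rintro ⟨t, s⟩
      by_cases hmem : (t, s) ∈ Set.Icc (0:ℝ) (max u 0) ×ˢ Set.Icc (0:ℝ) (max u 0)
      · rw [Set.indicator_of_mem hmem]
        obtain ⟨⟨ht0, htu⟩, ⟨hs0, hsu⟩⟩ := hmem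
        show ‖w t * (v s * F (u - t - s))‖ ≤ Bw * Bv * MF
        rw [norm_mul, norm_mul]
        have h1 : ‖F (u - t - s)‖ ≤ MF := hMF _ (by linarith)
        calc ‖w t‖ * (‖v s‖ * ‖F (u - t - s)‖)
            ≤ Bw * (Bv * MF) := by
              apply mul_le_mul (hBw t htu) _ (by positivity) hBw0
              exact mul_le_mul (hBv s hsu) h1 (norm_nonneg _) hBv0
          _ = Bw * Bv * MF := by ring
      · rw [Set.indicator_of_notMem hmem]
        have : Function.uncurry G (t, s) = 0 := by
          show w t * (v s * F (u - t - s)) = 0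
          rw [Set.mem_prod, not_and_or] at hmem
          by_cases ht : 0 ≤ t
          · by_cases hs : 0 ≤ s
            · have : u - t - s < 0 := by
                rcases hmem with hm | hm <;> rw [Set.mem_Icc, not_and_or] at hm <;>
                  rcases hm with hm | hm
                · exact absurd ht hm
                · have := not_le.mp hm; have := le_max_left u 0; linarith
                · exact absurd hs hm
                · have := not_le.mp hm; have := le_max_left u 0; linarith
              rw [hF.2.1 _ this, mul_zero, mul_zero]
            · rw [hv.2.1 s (not_le.mp hs), zero_mul, mul_zero]
          · rw [hw.2.1 t (not_le.mp ht), zero_mul]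
        rw [this, norm_zero]
  have hswap := integral_integral_swap (f := G) hGint
  have hLHS : (∫ t : ℝ, w t * ∫ s : ℝ, v s * F (u - t - s)) =
      ∫ t : ℝ, ∫ s : ℝ, G t s := by
    congr 1; funext t
    rw [hG]
    exact (integral_const_mul _ _).symm
  have hRHS : (∫ s : ℝ, v s * ∫ t : ℝ, w t * F ((u - s) - t)) =
      ∫ s : ℝ, ∫ t : ℝ, G t s := by
    congr 1; funext s
    rw [hG]
    rw [← integral_const_mul]
    congr 1; funext t
    simp only []
    rw [mul_left_comm]
    congr 2
    ring_nf
  rw [hLHS, hRHS, hswap]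

lemma K_succ_apply (j : ℕ) (u : ℝ) :
    K χ χh σ (j+1) u = ∫ t : ℝ, gfun χ χh t * K χ χh σ j (u - t) := rfl

lemma nice_gfun (hχ : ChiOKC χ) (hχh : ChiOKC χh) : Nice (gfun χ χh) :=
  nice_of_bounded (gfun_measurable hχ.1 hχh.1) (gfun_norm_le hχ hχh)
    (fun t ht => gfun_eq_zero (by linarith))

lemma nice_g2fun (hχ : ChiOKC χ) (hχh : ChiOKC χh) : Nice (g2fun χ χh) :=
  nice_of_bounded (g2fun_measurable hχ.1 hχh.1) (g2fun_norm_le hχ hχh)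
    (fun t ht => g2fun_eq_zero (by linarith))

lemma nice_cfun (hχ : ChiOKC χ) : Nice (cfun χ) :=
  nice_of_bounded (cfun_measurable hχ.1) (cfun_norm_le hχ) (fun t ht => cfun_eq_zero ht)

lemma nice_K (hχ : ChiOKC χ) (hχh : ChiOKC χh) (hσc : ContinuousOn σ (Set.Ici 0)) (j : ℕ) :
    Nice (K χ χh σ j) := by
  refine ⟨K_measurable hχ.1 hχh.1 hσc j, fun v hv => K_zero_of_lt j ?_, fun U => ?_⟩
  · exact lt_of_lt_of_le hv (by exact_mod_cast Nat.cast_nonneg j)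
  · obtain ⟨M, hM0, hM⟩ := K_norm_le hχ hχh hσc U
    exact ⟨M * (2 * max U 1)^j, fun v hv => hM j v hv⟩

lemma Nice.add {F G : ℝ → ℂ} (hF : Nice F) (hG : Nice G) : Nice (fun v => F v + G v) := by
  refine ⟨hF.1.add hG.1, fun v hv => by show F v + G v = 0; rw [hF.2.1 v hv, hG.2.1 v hv, add_zero], fun U => ?_⟩
  obtain ⟨M, hM⟩ := hF.2.2 U
  obtain ⟨N, hN⟩ := hG.2.2 U
  exact ⟨M + N, fun v hv => le_trans (norm_add_le _ _) (add_le_add (hM v hv) (hN v hv))⟩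

lemma Nice.const_mul {F : ℝ → ℂ} (hF : Nice F) (c : ℂ) : Nice (fun v => c * F v) := by
  refine ⟨measurable_const.mul hF.1, fun v hv => by show c * F v = 0; rw [hF.2.1 v hv, mul_zero], fun U => ?_⟩
  obtain ⟨M, hM⟩ := hF.2.2 U
  exact ⟨‖c‖ * M, fun v hv => by
    rw [norm_mul]
    exact mul_le_mul_of_nonneg_left (hM v hv) (norm_nonneg c)⟩

/-- the integral equation satisfied by `K 0`, extended to all of `ℝ`. -/
lemma K_zero_eqn (hχ : ChiOKC χ) (hσ : IsSolnC χ σ) (u : ℝ) :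
    (u : ℂ) * K χ χh σ 0 u = ∫ t : ℝ, cfun χ t * K χ χh σ 0 (u - t) := by
  by_cases hu : 0 ≤ u
  · have hzero : ∀ t ∉ Set.Icc (0:ℝ) u, cfun χ t * K χ χh σ 0 (u - t) = 0 := by
      intro t ht
      rw [Set.mem_Icc, not_and_or] at ht
      rcases ht with ht | ht
      · rw [cfun_eq_zero (not_le.mp ht), zero_mul]
      · rw [K_zero_apply_neg (by have := not_le.mp ht; linarith), mul_zero]
    rw [← setIntegral_eq_integral_of_forall_compl_eq_zero hzero, integral_Icc_eq_integral_Ioc]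
    have hcongr : ∫ t in Set.Ioc (0:ℝ) u, cfun χ t * K χ χh σ 0 (u - t) =
        ∫ t in Set.Ioc (0:ℝ) u, χ t * σ (u - t) := by
      apply setIntegral_congr_fun measurableSet_Ioc
      intro t ht
      rw [Set.mem_Ioc] at ht
      show cfun χ t * K χ χh σ 0 (u - t) = χ t * σ (u - t)
      rw [show cfun χ t = χ t from if_pos (le_of_lt ht.1),
        K_zero_apply _ (by linarith [ht.2])]
    rw [hcongr, K_zero_apply u hu]
    rw [← intervalIntegral.integral_of_le hu]
    by_cases hu1 : 1 < u
    · exact hσ.2.2 u hu1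
    · push_neg at hu1
      have : ∀ t ∈ Set.Ioc (0:ℝ) u, χ t * σ (u - t) = 1 := by
        intro t ht
        rw [Set.mem_Ioc] at ht
        show χ t * σ (u - t) = 1
        rw [hχ.2.1 t (le_of_lt ht.1) (le_trans ht.2 hu1),
          hσ.2.1 (u - t) (by linarith [ht.2]) (by linarith [ht.1]), one_mul]
      rw [intervalIntegral.integral_of_le hu, setIntegral_congr_fun measurableSet_Ioc this]
      rw [setIntegral_const, Measure.real, Real.volume_Ioc, sub_zero, ENNReal.toReal_ofReal hu]
      rw [hσ.2.1 u hu hu1]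
      simp
  · push_neg at hu
    rw [K_zero_apply_neg hu, mul_zero]
    have : (fun t : ℝ => cfun χ t * K χ χh σ 0 (u - t)) = fun _ => 0 := by
      funext t
      by_cases ht : 0 ≤ t
      · rw [K_zero_apply_neg (by linarith), mul_zero]
      · rw [cfun_eq_zero (not_le.mp ht), zero_mul]
    rw [this, integral_zero]

/-- core computation splitting `u = t + (u - t)`. -/
lemma step_core (hχ : ChiOKC χ) (hχh : ChiOKC χh) (hσc : ContinuousOn σ (Set.Ici 0))
    (j : ℕ) (u : ℝ) {A : ℝ → ℂ} (hA : Nice A)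
    (hprev : ∀ v : ℝ, ((v : ℝ) : ℂ) * K χ χh σ j v = A v) :
    (u : ℂ) * K χ χh σ (j+1) u =
      (∫ t : ℝ, g2fun χ χh t * K χ χh σ j (u - t)) + ∫ t : ℝ, gfun χ χh t * A (u - t) := by
  rw [K_succ_apply, ← integral_const_mul]
  have hpt : ∀ t : ℝ, (u : ℂ) * (gfun χ χh t * K χ χh σ j (u - t)) =
      g2fun χ χh t * K χ χh σ j (u - t) + gfun χ χh t * A (u - t) := by
    intro t
    have hsplit : (u : ℂ) = (t : ℂ) + ((u - t : ℝ) : ℂ) := by push_cast; ring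
    rw [hsplit, add_mul]
    congr 1
    · rw [← mul_assoc, mul_gfun]
    · rw [← hprev (u - t)]
      ring
  rw [integral_congr_ae (ae_of_all _ hpt)]
  exact integral_add
    (conv_integrand_integrable (nice_g2fun hχ hχh) (nice_K hχ hχh hσc j) u)
    (conv_integrand_integrable (nice_gfun hχ hχh) hA u)

/-- main recursion. -/
lemma K_succ_eqn (hχ : ChiOKC χ) (hχh : ChiOKC χh) (hσ : IsSolnC χ σ) :
    ∀ j : ℕ, ∀ u : ℝ, (u : ℂ) * K χ χh σ (j+1) u =
      (∫ t : ℝ, cfun χ t * K χ χh σ (j+1) (u - t)) +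
        ((j : ℂ) + 1) * ∫ t : ℝ, g2fun χ χh t * K χ χh σ j (u - t) := by
  intro j
  induction j with
  | zero =>
    intro u
    have hA : Nice (fun v => ∫ s : ℝ, cfun χ s * K χ χh σ 0 (v - s)) :=
      (nice_cfun hχ).conv (nice_K hχ hχh hσ.1 0)
    have := step_core hχ hχh hσ.1 0 u hA (fun v => K_zero_eqn hχ hσ v)
    rw [this, conv_assoc (nice_gfun hχ hχh) (nice_cfun hχ) (nice_K hχ hχh hσ.1 0) u]
    have : ∀ s : ℝ, cfun χ s * ∫ t : ℝ, gfun χ χh t * K χ χh σ 0 ((u - s) - t) =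
        cfun χ s * K χ χh σ 1 (u - s) := by
      intro s; rw [K_succ_apply]
    rw [integral_congr_ae (ae_of_all _ this)]
    push_cast
    ring
  | succ j ih =>
    intro u
    set A1 : ℝ → ℂ := fun v => ∫ s : ℝ, cfun χ s * K χ χh σ (j+1) (v - s) with hA1def
    set A2 : ℝ → ℂ := fun v => ∫ s : ℝ, g2fun χ χh s * K χ χh σ j (v - s) with hA2def
    have hA1 : Nice A1 := (nice_cfun hχ).conv (nice_K hχ hχh hσ.1 (j+1))
    have hA2 : Nice A2 := (nice_g2fun hχ hχh).conv (nice_K hχ hχh hσ.1 j)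
    have hA : Nice (fun v => A1 v + ((j : ℂ) + 1) * A2 v) :=
      hA1.add (hA2.const_mul ((j : ℂ) + 1))
    have hstep := step_core hχ hχh hσ.1 (j+1) u hA
      (fun v => by rw [ih v])
    rw [hstep]
    have hsplitint : (∫ t : ℝ, gfun χ χh t * (A1 (u - t) + ((j : ℂ) + 1) * A2 (u - t))) =
        (∫ t : ℝ, gfun χ χh t * A1 (u - t)) +
          ((j : ℂ) + 1) * ∫ t : ℝ, gfun χ χh t * A2 (u - t) := by
      have hpt : ∀ t : ℝ, gfun χ χh t * (A1 (u - t) + ((j : ℂ) + 1) * A2 (u - t)) =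
          gfun χ χh t * A1 (u - t) + ((j : ℂ) + 1) * (gfun χ χh t * A2 (u - t)) := by
        intro t; ring
      rw [integral_congr_ae (ae_of_all _ hpt)]
      rw [integral_add (conv_integrand_integrable (nice_gfun hχ hχh) hA1 u)
        ((conv_integrand_integrable (nice_gfun hχ hχh) hA2 u).const_mul _)]
      rw [integral_const_mul]
    rw [hsplitint]
    have e1 : (∫ t : ℝ, gfun χ χh t * A1 (u - t)) =
        ∫ s : ℝ, cfun χ s * K χ χh σ (j+2) (u - s) := by
      rw [hA1def]
      rw [conv_assoc (nice_gfun hχ hχh) (nice_cfun hχ) (nice_K hχ hχh hσ.1 (j+1)) u]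
      apply integral_congr_ae (ae_of_all _ _)
      intro s
      rw [K_succ_apply]
    have e2 : (∫ t : ℝ, gfun χ χh t * A2 (u - t)) =
        ∫ s : ℝ, g2fun χ χh s * K χ χh σ (j+1) (u - s) := by
      rw [hA2def]
      rw [conv_assoc (nice_gfun hχ hχh) (nice_g2fun hχ hχh) (nice_K hχ hχh hσ.1 j) u]
      apply integral_congr_ae (ae_of_all _ _)
      intro s
      rw [K_succ_apply]
    rw [e1, e2]
    push_cast
    ring
/-- partial sums. -/
def TN (χ χh σ : ℝ → ℂ) (N : ℕ) (u : ℝ) : ℂ :=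
  ∑ j ∈ Finset.range N, (1 / (j.factorial : ℂ)) * K χ χh σ j u

lemma nice_TN (hχ : ChiOKC χ) (hχh : ChiOKC χh) (hσc : ContinuousOn σ (Set.Ici 0)) (N : ℕ) :
    Nice (TN χ χh σ N) := by
  induction N with
  | zero =>
    have h0 : TN χ χh σ 0 = fun _ => 0 := by funext u; simp [TN]
    rw [h0]
    exact ⟨measurable_const, fun v _ => rfl, fun U => ⟨0, fun v _ => by simp⟩⟩
  | succ N ih =>
    have : TN χ χh σ (N+1) = fun u => TN χ χh σ N u +
        (1 / (N.factorial : ℂ)) * K χ χh σ N u := by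
      funext u; rw [TN, Finset.sum_range_succ]; rfl
    rw [this]
    exact ih.add ((nice_K hχ hχh hσc N).const_mul _)

lemma cfun_add_g2fun (hχ : ChiOKC χ) (hχh : ChiOKC χh) (t : ℝ) :
    cfun χ t + g2fun χ χh t = cfun χh t := by
  unfold cfun g2fun
  by_cases h1 : 1 ≤ t
  · rw [if_pos h1, if_pos (le_trans zero_le_one h1), if_pos (le_trans zero_le_one h1)]
    ring
  · rw [if_neg h1, add_zero]
    by_cases h0 : 0 ≤ t
    · rw [if_pos h0, if_pos h0, hχ.2.1 t h0 (le_of_not_ge h1), hχh.2.1 t h0 (le_of_not_ge h1)]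
    · rw [if_neg h0, if_neg h0]

/-- The integral equation for partial sums. -/
lemma TN_eqn (hχ : ChiOKC χ) (hχh : ChiOKC χh) (hσ : IsSolnC χ σ)
    (N : ℕ) (u : ℝ) (hu : u ≤ N + 1) :
    (u : ℂ) * TN χ χh σ (N+2) u = ∫ t : ℝ, cfun χh t * TN χ χh σ (N+2) (u - t) := by
  have hKint : ∀ (w : ℝ → ℂ), Nice w → ∀ (j : ℕ) (c : ℂ),
      Integrable (fun t : ℝ => w t * (c * K χ χh σ j (u - t))) := by
    intro w hw j c
    have := conv_integrand_integrable hw ((nice_K hχ hχh hσ.1 j).const_mul c) u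
    exact this
  -- expand u * sum
  have h1 : (u : ℂ) * TN χ χh σ (N+2) u =
      ∑ j ∈ Finset.range (N+2), (1 / (j.factorial : ℂ)) * ((u:ℂ) * K χ χh σ j u) := by
    rw [TN, Finset.mul_sum]
    apply Finset.sum_congr rfl
    intro j _
    ring
  rw [h1, Finset.sum_range_succ' (fun j => (1 / (j.factorial : ℂ)) * ((u:ℂ) * K χ χh σ j u)) (N+1)]
  -- rewrite each term by the equations
  have h2 : ∀ j ∈ Finset.range (N+1),
      (1 / ((j+1).factorial : ℂ)) * ((u:ℂ) * K χ χh σ (j+1) u) =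
      (1 / ((j+1).factorial : ℂ)) * (∫ t : ℝ, cfun χ t * K χ χh σ (j+1) (u - t)) +
      (1 / (j.factorial : ℂ)) * (∫ t : ℝ, g2fun χ χh t * K χ χh σ j (u - t)) := by
    intro j _
    rw [K_succ_eqn hχ hχh hσ j u]
    have hfac : ((j+1).factorial : ℂ) = ((j:ℂ)+1) * (j.factorial : ℂ) := by
      rw [Nat.factorial_succ]; push_cast; ring
    have hfne : ((j.factorial : ℕ) : ℂ) ≠ 0 := by
      exact_mod_cast Nat.cast_ne_zero.mpr (Nat.factorial_ne_zero j)
    have hjne : ((j:ℂ)+1) ≠ 0 := by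
      have : (0:ℝ) < (j:ℝ) + 1 := by positivity
      intro h
      have := congrArg Complex.re h
      simp at this
      linarith
    rw [hfac]
    field_simp
  rw [Finset.sum_congr rfl h2, Finset.sum_add_distrib]
  -- first part: reassemble the full cfun-sum
  have h3 : (∑ j ∈ Finset.range (N+1),
        (1 / ((j+1).factorial : ℂ)) * ∫ t : ℝ, cfun χ t * K χ χh σ (j+1) (u - t)) +
      (1 / ((0:ℕ).factorial : ℂ)) * ((u:ℂ) * K χ χh σ 0 u) =
      ∑ j ∈ Finset.range (N+2), (1 / (j.factorial : ℂ)) *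
        ∫ t : ℝ, cfun χ t * K χ χh σ j (u - t) := by
    rw [Finset.sum_range_succ'
      (fun j => (1 / (j.factorial : ℂ)) * ∫ t : ℝ, cfun χ t * K χ χh σ j (u - t)) (N+1)]
    congr 1
    rw [K_zero_eqn hχ hσ u]
  rw [add_right_comm, h3]
  -- swap sums and integrals
  have h4 : ∀ (w : ℝ → ℂ), Nice w → ∀ (m : ℕ),
      (∑ j ∈ Finset.range m, (1 / (j.factorial : ℂ)) *
        ∫ t : ℝ, w t * K χ χh σ j (u - t)) =
      ∫ t : ℝ, w t * TN χ χh σ m (u - t) := by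
    intro w hw m
    have hterm : ∀ j ∈ Finset.range m, (1 / (j.factorial : ℂ)) *
        (∫ t : ℝ, w t * K χ χh σ j (u - t)) =
        ∫ t : ℝ, w t * ((1 / (j.factorial : ℂ)) * K χ χh σ j (u - t)) := by
      intro j _
      rw [← integral_const_mul]
      congr 1; funext t; ring
    rw [Finset.sum_congr rfl hterm, ← integral_finset_sum _ (fun j _ => hKint w hw j _)]
    congr 1; funext t
    rw [TN, Finset.mul_sum]
  rw [h4 (cfun χ) (nice_cfun hχ) (N+2), h4 (g2fun χ χh) (nice_g2fun hχ hχh) (N+1)]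
  -- extend the g2 part from N+1 to N+2 using support
  have h5 : (∫ t : ℝ, g2fun χ χh t * TN χ χh σ (N+1) (u - t)) =
      ∫ t : ℝ, g2fun χ χh t * TN χ χh σ (N+2) (u - t) := by
    apply integral_congr_ae (ae_of_all _ _)
    intro t
    by_cases ht : 1 ≤ t
    · have hz : K χ χh σ (N+1) (u - t) = 0 := K_succ_zero_of_le N (by push_cast; linarith)
      have hsplit : TN χ χh σ (N+2) (u - t) = TN χ χh σ (N+1) (u - t) := by
        rw [TN, TN, Finset.sum_range_succ, hz, mul_zero, add_zero]
      rw [hsplit]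
    · rw [g2fun_eq_zero (not_le.mp ht), zero_mul, zero_mul]
  rw [h5]
  -- combine
  have h6 : Integrable (fun t : ℝ => cfun χ t * TN χ χh σ (N+2) (u - t)) :=
    conv_integrand_integrable (nice_cfun hχ) (nice_TN hχ hχh hσ.1 (N+2)) u
  have h7 : Integrable (fun t : ℝ => g2fun χ χh t * TN χ χh σ (N+2) (u - t)) :=
    conv_integrand_integrable (nice_g2fun hχ hχh) (nice_TN hχ hχh hσ.1 (N+2)) u
  rw [← integral_add h6 h7]
  apply integral_congr_ae (ae_of_all _ _)
  intro t
  rw [← add_mul, cfun_add_g2fun hχ hχh]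
/-- For `0 ≤ v ≤ 1`, the partial sums reduce to `σ v`. -/
lemma TN_eq_sigma_on_unit (hσ : IsSolnC χ σ) (m : ℕ) {v : ℝ} (h0 : 0 ≤ v) (h1 : v ≤ 1) :
    TN χ χh σ (m+1) v = σ v := by
  rw [TN, Finset.sum_eq_single_of_mem 0 (Finset.mem_range.mpr (Nat.succ_pos m))]
  · rw [K_zero_apply v h0]
    simp
  · intro j _ hj
    obtain ⟨i, rfl⟩ := Nat.exists_eq_succ_of_ne_zero hj
    rw [K_succ_zero_of_le i (by push_cast; linarith), mul_zero]

/-- Uniqueness: `σh` agrees with the partial sums. -/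
lemma sigmah_eq_TN (hχ : ChiOKC χ) (hχh : ChiOKC χh) (hσ : IsSolnC χ σ)
    (hσh : IsSolnC χh σh) (N : ℕ) (u : ℝ) (hu0 : 0 ≤ u) (hu : u ≤ N + 1) :
    σh u = TN χ χh σ (N+2) u := by
  set H : ℝ → ℂ := K χh χh σh 0 with hHdef
  set D : ℝ → ℂ := fun v => H v - TN χ χh σ (N+2) v with hDdef
  have hnH : Nice H := nice_K hχh hχh hσh.1 0
  have hnT : Nice (TN χ χh σ (N+2)) := nice_TN hχ hχh hσ.1 (N+2)
  have hnD : Nice D := by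
    have : D = fun v => H v + (-1 : ℂ) * TN χ χh σ (N+2) v := by
      funext v; rw [hDdef]; ring
    rw [this]
    exact hnH.add (hnT.const_mul (-1))
  obtain ⟨M, hM0, hM⟩ := hnD.bound ((N:ℝ) + 1)
  have hDeqn : ∀ v : ℝ, v ≤ (N:ℝ) + 1 →
      (v : ℂ) * D v = ∫ t : ℝ, cfun χh t * D (v - t) := by
    intro v hv
    have h1 := K_zero_eqn (χh := χh) (σ := σh) hχh hσh v
    have h2 := TN_eqn hχ hχh hσ N v hv
    have h3 : (v : ℂ) * D v = (v:ℂ) * H v - (v:ℂ) * TN χ χh σ (N+2) v := by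
      rw [hDdef]; ring
    rw [h3, h1, h2, ← integral_sub
      (conv_integrand_integrable (nice_cfun hχh) hnH v)
      (conv_integrand_integrable (nice_cfun hχh) hnT v)]
    apply integral_congr_ae (ae_of_all _ _)
    intro t
    rw [hDdef]; ring
  have hDunit : ∀ v : ℝ, v ≤ 1 → D v = 0 := by
    intro v hv
    by_cases h0 : 0 ≤ v
    · rw [hDdef]
      simp only []
      rw [hHdef, K_zero_apply v h0, hσh.2.1 v h0 hv,
        TN_eq_sigma_on_unit hσ (N+1) h0 hv, hσ.2.1 v h0 hv, sub_self]
    · rw [hDdef]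
      simp only []
      rw [hnH.2.1 v (not_le.mp h0), hnT.2.1 v (not_le.mp h0), sub_self]
  -- Gronwall-type iteration
  have key : ∀ n : ℕ, ∀ v : ℝ, 0 ≤ v → v ≤ (N:ℝ) + 1 →
      ‖D v‖ ≤ M * v ^ n / n.factorial := by
    intro n
    induction n with
    | zero =>
      intro v h0 h1
      simpa using hM v h1
    | succ n ih =>
      intro v h0 h1
      by_cases hv1 : v ≤ 1
      · rw [hDunit v hv1, norm_zero]
        positivity
      · push_neg at hv1
        have hstep1 : ‖D v‖ ≤ ‖(v : ℂ) * D v‖ := by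
          rw [norm_mul, Complex.norm_real, Real.norm_eq_abs, abs_of_nonneg h0]
          nlinarith [norm_nonneg (D v)]
        have hstep2 : ‖(v : ℂ) * D v‖ ≤ ∫ t : ℝ, ‖cfun χh t * D (v - t)‖ := by
          rw [hDeqn v h1]
          exact norm_integral_le_integral_norm _
        set φ : ℝ → ℝ := (Set.Icc (0:ℝ) v).indicator
          (fun t => M * (v - t) ^ n / n.factorial) with hφdef
        have hφint : Integrable φ := by
          rw [hφdef, integrable_indicator_iff measurableSet_Icc]
          apply ContinuousOn.integrableOn_compact isCompact_Icc
          fun_prop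
        have hstep3 : (∫ t : ℝ, ‖cfun χh t * D (v - t)‖) ≤ ∫ t : ℝ, φ t := by
          apply integral_mono_of_nonneg (ae_of_all _ fun t => norm_nonneg _) hφint
          apply ae_of_all
          intro t
          show ‖cfun χh t * D (v - t)‖ ≤ φ t
          by_cases hmem : t ∈ Set.Icc (0:ℝ) v
          · rw [hφdef, Set.indicator_of_mem hmem]
            obtain ⟨ht0, htv⟩ := hmem
            rw [norm_mul]
            have hD : ‖D (v - t)‖ ≤ M * (v - t) ^ n / n.factorial :=
              ih (v - t) (by linarith) (by linarith)
            calc ‖cfun χh t‖ * ‖D (v - t)‖ ≤ 1 * (M * (v - t) ^ n / n.factorial) :=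
                  mul_le_mul (cfun_norm_le hχh t) hD (norm_nonneg _) zero_le_one
              _ = M * (v - t) ^ n / n.factorial := one_mul _
          · rw [hφdef, Set.indicator_of_notMem hmem]
            rw [Set.mem_Icc, not_and_or] at hmem
            rcases hmem with hm | hm
            · rw [cfun_eq_zero (not_le.mp hm), zero_mul, norm_zero]
            · rw [hnD.2.1 (v - t) (by have := not_le.mp hm; linarith), mul_zero, norm_zero]
        have hstep4 : (∫ t : ℝ, φ t) = M * v ^ (n+1) / (n+1).factorial := by
          rw [hφdef, integral_indicator measurableSet_Icc,
            integral_Icc_eq_integral_Ioc, ← intervalIntegral.integral_of_le h0]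
          have : ∀ t : ℝ, M * (v - t) ^ n / n.factorial =
              (M / n.factorial) * (v - t) ^ n := by intro t; ring
          simp only [this]
          rw [intervalIntegral.integral_const_mul,
            intervalIntegral.integral_comp_sub_left (fun x => x ^ n) v,
            sub_self, sub_zero, integral_pow]
          have hfne : ((n.factorial : ℕ) : ℝ) ≠ 0 := by
            exact_mod_cast Nat.factorial_ne_zero n
          have hn1 : ((n:ℝ) + 1) ≠ 0 := by positivity
          rw [Nat.factorial_succ]
          push_cast
          rw [zero_pow (Nat.succ_ne_zero n)]
          field_simp
          ring_nf
        calc ‖D v‖ ≤ ‖(v:ℂ) * D v‖ := hstep1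
          _ ≤ ∫ t : ℝ, ‖cfun χh t * D (v - t)‖ := hstep2
          _ ≤ ∫ t : ℝ, φ t := hstep3
          _ = M * v ^ (n+1) / (n+1).factorial := hstep4
  have hlim : Filter.Tendsto (fun n : ℕ => M * u ^ n / n.factorial) Filter.atTop (nhds 0) := by
    have h1 := FloorSemiring.tendsto_pow_div_factorial_atTop (K := ℝ) u
    have h2 := h1.const_mul M
    rw [mul_zero] at h2
    convert h2 using 2 with n
    ring
  have hle : ‖D u‖ ≤ 0 := ge_of_tendsto' hlim (fun n => key n u hu0 hu)
  have hD0 : D u = 0 := norm_le_zero_iff.mp hle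
  have : H u = TN χ χh σ (N+2) u := by
    have := sub_eq_zero.mp hD0
    exact this
  rw [← this, hHdef, K_zero_apply u hu0]
/-- the `Jfn` integrand, in terms of the global kernels. -/
def Gfn (χ χh σ : ℝ → ℂ) (j : ℕ) (u : ℝ) (t : Fin j → ℝ) : ℂ :=
  (∏ i, gfun χ χh (t i)) * K χ χh σ 0 (u - ∑ i, t i)

lemma Gfn_measurable (hχ : Measurable χ) (hχh : Measurable χh)
    (hσc : ContinuousOn σ (Set.Ici 0)) (j : ℕ) (u : ℝ) :
    Measurable (Gfn χ χh σ j u) := by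
  apply Measurable.mul
  · apply Finset.measurable_prod
    intro i _
    exact (gfun_measurable hχ hχh).comp (measurable_pi_apply i)
  · exact (K_zero_measurable hσc).comp
      (measurable_const.sub (Finset.measurable_sum _ (fun i _ => measurable_pi_apply i)))

lemma Gfn_norm_le (hχ : ChiOKC χ) (hχh : ChiOKC χh) (hσc : ContinuousOn σ (Set.Ici 0))
    (j : ℕ) (u : ℝ) : ∃ C : ℝ, 0 ≤ C ∧ ∀ t : Fin j → ℝ, ‖Gfn χ χh σ j u t‖ ≤ C := by
  obtain ⟨M, hM0, hM⟩ := (nice_K hχ hχh hσc 0).bound u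
  refine ⟨2^j * M, by positivity, ?_⟩
  intro t
  rw [Gfn, norm_mul]
  by_cases hsum : 0 ≤ ∑ i, t i
  · have h1 : ‖∏ i, gfun χ χh (t i)‖ ≤ 2^j := by
      rw [norm_prod]
      calc ∏ i, ‖gfun χ χh (t i)‖ ≤ ∏ _i : Fin j, 2 :=
            Finset.prod_le_prod (fun i _ => norm_nonneg _) (fun i _ => gfun_norm_le hχ hχh (t i))
        _ = 2^j := by rw [Finset.prod_const, Finset.card_univ, Fintype.card_fin]
    have h2 : ‖K χ χh σ 0 (u - ∑ i, t i)‖ ≤ M := hM _ (by linarith)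
    exact mul_le_mul h1 h2 (norm_nonneg _) (by positivity)
  · push_neg at hsum
    obtain ⟨i, hi⟩ : ∃ i, t i < 1 := by
      by_contra h
      push_neg at h
      have : (0:ℝ) ≤ ∑ i, t i := Finset.sum_nonneg (fun i _ => le_trans zero_le_one (h i))
      linarith
    rw [show (∏ i, gfun χ χh (t i)) = 0 from
      Finset.prod_eq_zero (Finset.mem_univ i) (gfun_eq_zero hi)]
    rw [norm_zero, zero_mul]
    positivity

lemma Gfn_zero_outside (j : ℕ) (u : ℝ) (t : Fin j → ℝ)
    (h : t ∉ Set.pi Set.univ (fun _ : Fin j => Set.Icc (0:ℝ) (max u 0))) :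
    Gfn χ χh σ j u t = 0 := by
  rw [Set.mem_univ_pi] at h
  push_neg at h
  obtain ⟨i, hi⟩ := h
  rw [Set.mem_Icc, not_and_or] at hi
  rcases hi with hi | hi
  · rw [Gfn, Finset.prod_eq_zero (Finset.mem_univ i)
      (gfun_eq_zero (by linarith [not_le.mp hi])), zero_mul]
  · by_cases hall : ∀ k, 1 ≤ t k
    · have hsum : u - ∑ k, t k < 0 := by
        have h1 : t i ≤ ∑ k, t k := by
          apply Finset.single_le_sum (f := fun k => t k) (fun k _ => le_trans zero_le_one (hall k))
            (Finset.mem_univ i)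
        have := not_le.mp hi
        have := le_max_left u 0
        linarith
      rw [Gfn, K_zero_apply_neg hsum, mul_zero]
    · push_neg at hall
      obtain ⟨k, hk⟩ := hall
      rw [Gfn, Finset.prod_eq_zero (Finset.mem_univ k) (gfun_eq_zero hk), zero_mul]

lemma Gfn_integrable (hχ : ChiOKC χ) (hχh : ChiOKC χh) (hσc : ContinuousOn σ (Set.Ici 0))
    (j : ℕ) (u : ℝ) : Integrable (Gfn χ χh σ j u) := by
  obtain ⟨C, hC0, hC⟩ := Gfn_norm_le hχ hχh hσc j u
  set box := Set.pi Set.univ (fun _ : Fin j => Set.Icc (0:ℝ) (max u 0)) with hbox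
  have hboxm : MeasurableSet box := MeasurableSet.univ_pi (fun _ => measurableSet_Icc)
  have hio : IntegrableOn (Gfn χ χh σ j u) box := by
    apply Measure.integrableOn_of_bounded (M := C)
    · rw [hbox, volume_pi, Measure.pi_pi]
      rw [Finset.prod_const, Finset.card_univ, Fintype.card_fin]
      exact ENNReal.pow_ne_top (by rw [Real.volume_Icc]; exact ENNReal.ofReal_ne_top)
    · exact (Gfn_measurable hχ.1 hχh.1 hσc j u).aestronglyMeasurable
    · exact ae_of_all _ (fun t => hC t)
  exact hio.integrable_of_forall_notMem_eq_zero (fun t ht => Gfn_zero_outside j u t ht)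

/-- `Jfn` as a full-space integral of `Gfn`. -/
lemma Jfn_eq_Gfn_integral (j : ℕ) (u : ℝ) :
    Jfn χ χh σ j u = ∫ t : Fin j → ℝ, Gfn χ χh σ j u t := by
  set S := {t : Fin j → ℝ | (∀ i, 1 ≤ t i) ∧ ∑ i, t i ≤ u} with hS
  have hSm : MeasurableSet S := by
    have hSeq : S = (⋂ i, {t : Fin j → ℝ | 1 ≤ t i}) ∩ {t : Fin j → ℝ | ∑ i, t i ≤ u} := by
      ext t; simp [hS, Set.mem_iInter]
    rw [hSeq]
    apply MeasurableSet.inter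
    · exact MeasurableSet.iInter (fun i =>
        measurableSet_le measurable_const (measurable_pi_apply i))
    · exact measurableSet_le (Finset.measurable_sum _ (fun i _ => measurable_pi_apply i))
        measurable_const
  have hcongr : Jfn χ χh σ j u = ∫ t in S, Gfn χ χh σ j u t := by
    apply setIntegral_congr_fun hSm
    intro t ht
    obtain ⟨h1, h2⟩ := ht
    show (∏ i, (χh (t i) - χ (t i)) / ((t i : ℝ) : ℂ)) * σ (u - ∑ i, t i) =
      Gfn χ χh σ j u t
    rw [Gfn]
    congr 1
    · apply Finset.prod_congr rfl
      intro i _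
      rw [gfun, if_pos (h1 i)]
    · rw [K_zero_apply _ (by linarith)]
  rw [hcongr]
  apply setIntegral_eq_integral_of_forall_compl_eq_zero
  intro t ht
  rw [hS, Set.mem_setOf_eq, not_and_or] at ht
  rcases ht with ht | ht
  · push_neg at ht
    obtain ⟨i, hi⟩ := ht
    rw [Gfn, Finset.prod_eq_zero (Finset.mem_univ i) (gfun_eq_zero hi), zero_mul]
  · rw [Gfn, K_zero_apply_neg (by linarith [not_le.mp ht]), mul_zero]

/-- the full-space `Gfn` integral equals `K j`. -/
lemma Gfn_integral_eq_K (hχ : ChiOKC χ) (hχh : ChiOKC χh) (hσc : ContinuousOn σ (Set.Ici 0)) :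
    ∀ j : ℕ, ∀ u : ℝ, (∫ t : Fin j → ℝ, Gfn χ χh σ j u t) = K χ χh σ j u := by
  intro j
  induction j with
  | zero =>
    intro u
    have h1 : ∀ t : Fin 0 → ℝ, Gfn χ χh σ 0 u t = K χ χh σ 0 u := by
      intro t
      rw [Gfn]
      simp
    rw [integral_congr_ae (ae_of_all _ h1), integral_const]
    rw [volume_pi, Measure.real, Measure.pi_univ]
    simp
  | succ j ih =>
    intro u
    set e := MeasurableEquiv.piFinSuccAbove (fun _ : Fin (j+1) => ℝ) 0 with he
    have hmp : MeasurePreserving e volume volume :=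
      volume_preserving_piFinSuccAbove (fun _ : Fin (j+1) => ℝ) 0
    set G' : ℝ × (Fin j → ℝ) → ℂ := fun p =>
      gfun χ χh p.1 * ((∏ i, gfun χ χh (p.2 i)) * K χ χh σ 0 ((u - p.1) - ∑ i, p.2 i)) with hG'
    have hex : ∀ x : Fin (j+1) → ℝ, e x = (x 0, fun i : Fin j => x (Fin.succAbove 0 i)) := by
      intro x; rfl
    have hcomp : ∀ x : Fin (j+1) → ℝ, Gfn χ χh σ (j+1) u x = G' (e x) := by
      intro x
      rw [Gfn, hex, hG']
      simp only [Fin.succAbove_zero]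
      rw [Fin.prod_univ_succ, Fin.sum_univ_succ, sub_add_eq_sub_sub, mul_assoc]
    have hint : Integrable G' ((volume : Measure ℝ).prod volume) := by
      rw [← Measure.volume_eq_prod ℝ (Fin j → ℝ), ← hmp.integrable_comp_emb e.measurableEmbedding]
      have hGe : (G' ∘ e) = Gfn χ χh σ (j+1) u := by
        funext x; rw [Function.comp_apply, ← hcomp x]
      rw [hGe]
      exact Gfn_integrable hχ hχh hσc (j+1) u
    calc (∫ x : Fin (j+1) → ℝ, Gfn χ χh σ (j+1) u x)
        = ∫ x : Fin (j+1) → ℝ, G' (e x) := integral_congr_ae (ae_of_all _ hcomp)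
      _ = ∫ y, G' y := hmp.integral_comp e.measurableEmbedding G'
      _ = ∫ y, G' y ∂((volume : Measure ℝ).prod volume) := by rw [← Measure.volume_eq_prod ℝ (Fin j → ℝ)]
      _ = ∫ s : ℝ, ∫ r : Fin j → ℝ, G' (s, r) := integral_prod G' hint
      _ = ∫ s : ℝ, gfun χ χh s * K χ χh σ j (u - s) := by
          apply integral_congr_ae (ae_of_all _ _)
          intro s
          have h1 : (fun r : Fin j → ℝ => G' (s, r)) =
              fun r => gfun χ χh s * Gfn χ χh σ j (u - s) r := rfl
          rw [h1, integral_const_mul, ih (u - s)]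
      _ = K χ χh σ (j+1) u := (K_succ_apply j u).symm

lemma Jfn_eq_K (hχ : ChiOKC χ) (hχh : ChiOKC χh) (hσc : ContinuousOn σ (Set.Ici 0))
    (j : ℕ) (u : ℝ) : Jfn χ χh σ j u = K χ χh σ j u := by
  rw [Jfn_eq_Gfn_integral, Gfn_integral_eq_K hχ hχh hσc]

end GS25

open GS25 in
/-- Lemma 2.5 of Granville–Soundararajan, "The number of unsieved integers up to x":
for measurable `χ, χ̂` equal to `1` on `[0,1]` and bounded by `1`, with corresponding
solutions `σ, σ̂`, one has for every `u ≥ 0`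
`σ̂(u) = σ(u) + ∑_{j≥1} (1/j!) ∫_{t_1,…,t_j ≥ 1, ∑ t_i ≤ u}
  ∏_i (χ̂(t_i)-χ(t_i))/t_i ⋅ σ(u-∑ t_i) dt`. -/
theorem lemma2_5 (χ χh : ℝ → ℂ) (σ σh : ℝ → ℂ)
    (hχ : ChiOKC χ) (hχh : ChiOKC χh)
    (hσ : IsSolnC χ σ) (hσh : IsSolnC χh σh)
    (u : ℝ) (hu : 0 ≤ u) :
    σh u = σ u +
      ∑' j : ℕ, (1 / ((j + 1).factorial : ℂ)) * Jfn χ χh σ (j + 1) u := by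
  set N := ⌈u⌉₊ with hN
  have hu1 : u ≤ (N : ℝ) + 1 := le_trans (Nat.le_ceil u) (by linarith)
  have h0 := sigmah_eq_TN hχ hχh hσ hσh N u hu hu1
  have hts : (∑' j : ℕ, (1 / ((j + 1).factorial : ℂ)) * Jfn χ χh σ (j + 1) u) =
      ∑ j ∈ Finset.range (N+1), (1 / ((j + 1).factorial : ℂ)) * K χ χh σ (j + 1) u := by
    rw [tsum_congr (fun j => by rw [Jfn_eq_K hχ hχh hσ.1 (j+1) u])]
    apply tsum_eq_sum
    intro j hj
    rw [Finset.mem_range, not_lt] at hj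
    have : u ≤ (j : ℝ) + 1 := by
      refine le_trans hu1 ?_
      have hNj : N + 1 ≤ j := hj
      have : ((N:ℝ)) + 1 ≤ (j : ℝ) := by exact_mod_cast hNj
      linarith
    rw [K_succ_zero_of_le j this, mul_zero]
  rw [h0, hts, TN, Finset.sum_range_succ'
    (fun j => (1 / (j.factorial : ℂ)) * K χ χh σ j u) (N+1)]
  rw [K_zero_apply u hu]
  rw [Nat.factorial_zero]
  push_cast
  rw [add_comm]
  congr 1
  rw [one_div_one, one_mul]
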